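/- Let ω, ω′ ∈ Ω_n. A linear operator T : L_n → L_n satisfies both (i) the Leibniz rule T(f·g)(x,y) = f(x,y) T g(x,y) + g(ω_{|x|−1}, ω′_{|y|−1}) T f(x,y) for all f, g ∈ L_n and x, y ∈ Q_n, and (ii) T f(x,y) = 0 whenever ω_{|x|} ≠ x or ω′_{|y|} ≠ y, if and only if there exists a function β ∈ L_n such that T = β·△_{ω,ω′}, i.e. T f(x,y) = β(x,y)·△_{ω,ω′} f(x,y) for all f ∈ L_n and x, y ∈ Q_n. -/

import Mathlib

attribute [local instance] Classical.propDecidable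

/-- A pre-causet: a finite set `Fin card` endowed with an irreflexive,
transitive (causal order) relation. -/
structure PreCauset where
  card : ℕ
  rel : Fin card → Fin card → Prop
  irrefl : ∀ a, ¬ rel a a
  trans : ∀ a b c, rel a b → rel b c → rel a c

/-- Order isomorphism of pre-causets. -/
def PreCauset.Iso (x y : PreCauset) : Prop :=
  ∃ e : Fin x.card ≃ Fin y.card, ∀ a b, x.rel a b ↔ y.rel (e a) (e b)

/-- `y` is produced from `x` (an offspring of `x`) if `y` is obtained from `x`
by adjoining a single new element that is maximal in `y`. -/
def PreCauset.Offspring (x y : PreCauset) : Prop :=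
  y.card = x.card + 1 ∧
    ∃ e : Fin x.card → Fin y.card, Function.Injective e ∧
      (∀ a b, x.rel a b ↔ y.rel (e a) (e b)) ∧
      (∀ c, c ∉ Set.range e → ∀ d, ¬ y.rel c d)

/-- A causal set (causet): a finite partially ordered set considered up to
order isomorphism. -/
def Causet : Type := Quot PreCauset.Iso

/-- The cardinality `|x|` of a causet. -/
def Causet.card : Causet → ℕ :=
  Quot.lift PreCauset.card fun _ _ h => by
    obtain ⟨e, -⟩ := h
    simpa using Fintype.card_congr e

/-- The offspring (production) relation `x → y` on causets. -/
def Causet.Offspring (x y : Causet) : Prop :=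
  ∃ a b : PreCauset, Quot.mk PreCauset.Iso a = x ∧ Quot.mk PreCauset.Iso b = y ∧
    a.Offspring b

/-- `Q n`: the collection of causets `x` with `1 ≤ |x| ≤ n`. -/
def Causet.Q (n : ℕ) : Type := {x : Causet // 1 ≤ x.card ∧ x.card ≤ n}

/-- The cardinality of an element of `Q n`. -/
def Causet.Q.card {n : ℕ} (x : Causet.Q n) : ℕ := x.val.card

/-- A path in `Q n`: a finite sequence `ω = ω₁ ω₂ ⋯ ωₙ` with `ω_j ∈ Q n`,
`|ω_j| = j` and `ω_j → ω_{j+1}` for `1 ≤ j ≤ n-1` (0-indexed internally). -/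
structure CausetPath (n : ℕ) where
  toFun : Fin n → Causet.Q n
  card_eq : ∀ j : Fin n, (toFun j).card = j.val + 1
  offspring : ∀ (j : ℕ) (h : j + 1 < n),
    Causet.Offspring (toFun ⟨j, Nat.lt_of_succ_lt h⟩).val (toFun ⟨j + 1, h⟩).val

/-- `ω.nth k` is `some ω_k` for `1 ≤ k ≤ n`, and `none` for the undefined
symbol `ω_0` (or any out-of-range index). -/
def CausetPath.nth {n : ℕ} (ω : CausetPath n) (k : ℕ) : Option (Causet.Q n) :=
  if h : 1 ≤ k ∧ k ≤ n then some (ω.toFun ⟨k - 1, by omega⟩) else none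

/-- Evaluation of `f ∈ K_n` with the convention `f(ω_0) := 0`. -/
def evalO {n : ℕ} (f : Causet.Q n → ℂ) : Option (Causet.Q n) → ℂ
  | some x => f x
  | none => 0

/-- Evaluation of `f ∈ L_n` with the convention that any term involving the
undefined symbols `ω_0` or `ω′_0` is `0`. -/
def evalO2 {n : ℕ} (f : Causet.Q n → Causet.Q n → ℂ) :
    Option (Causet.Q n) → Option (Causet.Q n) → ℂ
  | some x, some y => f x y
  | _, _ => 0

/-- The Kronecker delta `δ_{x, ω_{|x|}}`. -/
noncomputable def pathDelta {n : ℕ} (ω : CausetPath n) (x : Causet.Q n) : ℂ :=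
  if ω.nth x.card = some x then 1 else 0

/-- The difference operator `△_ω f (x) = [f(x) - f(ω_{|x|-1})] δ_{x, ω_{|x|}}`. -/
noncomputable def diffOp {n : ℕ} (ω : CausetPath n) (f : Causet.Q n → ℂ) :
    Causet.Q n → ℂ :=
  fun x => (f x - evalO f (ω.nth (x.card - 1))) * pathDelta ω x

/-- The bidifference operator
`△_{ω,ω′} f (x,y) = [f(x,y) - f(ω_{|x|-1}, ω′_{|y|-1})] δ_{x,ω_{|x|}} δ_{y,ω′_{|y|}}`. -/
noncomputable def bidiffOp {n : ℕ} (ω ω' : CausetPath n)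
    (f : Causet.Q n → Causet.Q n → ℂ) : Causet.Q n → Causet.Q n → ℂ :=
  fun x y =>
    (f x y - evalO2 f (ω.nth (x.card - 1)) (ω'.nth (y.card - 1))) *
      pathDelta ω x * pathDelta ω' y

/-- The Christoffel symbols `α_ω(x) = [μ(ω_{|x|-1}) - μ(x)] δ_{x, ω_{|x|}}`. -/
noncomputable def alphaOp {n : ℕ} (ω : CausetPath n) (μ : Causet.Q n → ℂ)
    (x : Causet.Q n) : ℂ :=
  (evalO μ (ω.nth (x.card - 1)) - μ x) * pathDelta ω x

/-- The covariant difference operator `∇_ω = μ △_ω + α_ω`. -/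
noncomputable def covDiffOp {n : ℕ} (ω : CausetPath n) (μ f : Causet.Q n → ℂ) :
    Causet.Q n → ℂ :=
  fun x => μ x * diffOp ω f x + alphaOp ω μ x * f x

/-- The Christoffel symbols
`α_{ω,ω′}(x,y) = [D(ω_{|x|-1}, ω′_{|y|-1}) - D(x,y)] δ_{x,ω_{|x|}} δ_{y,ω′_{|y|}}`. -/
noncomputable def alpha2Op {n : ℕ} (ω ω' : CausetPath n)
    (D : Causet.Q n → Causet.Q n → ℂ) (x y : Causet.Q n) : ℂ :=
  (evalO2 D (ω.nth (x.card - 1)) (ω'.nth (y.card - 1)) - D x y) *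
    pathDelta ω x * pathDelta ω' y

/-- The covariant bidifference operator `∇_{ω,ω′} = D △_{ω,ω′} + α_{ω,ω′}`. -/
noncomputable def covBidiffOp {n : ℕ} (ω ω' : CausetPath n)
    (D f : Causet.Q n → Causet.Q n → ℂ) : Causet.Q n → Causet.Q n → ℂ :=
  fun x y => D x y * bidiffOp ω ω' f x y + alpha2Op ω ω' D x y * f x y

/-- The curvature operator `R_{ω,ω′} = ∇_{ω,ω′} - ∇_{ω′,ω}`. -/
noncomputable def curvOp {n : ℕ} (ω ω' : CausetPath n)
    (D f : Causet.Q n → Causet.Q n → ℂ) : Causet.Q n → Causet.Q n → ℂ :=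
  fun x y => covBidiffOp ω ω' D f x y - covBidiffOp ω' ω D f x y

/-- The metric operator `𝒟_{ω,ω′}`. -/
noncomputable def metricOp {n : ℕ} (ω ω' : CausetPath n)
    (D f : Causet.Q n → Causet.Q n → ℂ) : Causet.Q n → Causet.Q n → ℂ :=
  fun x y =>
    D x y *
      (evalO2 f (ω'.nth (x.card - 1)) (ω.nth (y.card - 1)) *
          pathDelta ω' x * pathDelta ω y -
        evalO2 f (ω.nth (x.card - 1)) (ω'.nth (y.card - 1)) *
          pathDelta ω x * pathDelta ω' y)

/-- The mass-energy operator `𝒯_{ω,ω′}`. -/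
noncomputable def massOp {n : ℕ} (ω ω' : CausetPath n)
    (D f : Causet.Q n → Causet.Q n → ℂ) : Causet.Q n → Causet.Q n → ℂ :=
  fun x y =>
    (evalO2 D (ω.nth (x.card - 1)) (ω'.nth (y.card - 1)) *
        pathDelta ω x * pathDelta ω' y -
      evalO2 D (ω'.nth (x.card - 1)) (ω.nth (y.card - 1)) *
        pathDelta ω' x * pathDelta ω y) * f x y

/-- The standard inner product on `K_n = ℂ^{Q_n}`. -/
noncomputable def Kinner {n : ℕ} [Fintype (Causet.Q n)]
    (f g : Causet.Q n → ℂ) : ℂ :=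
  ∑ x, (starRingEnd ℂ) (f x) * g x

/-- The standard inner product on `L_n = ℂ^{Q_n × Q_n}`. -/
noncomputable def Linner {n : ℕ} [Fintype (Causet.Q n)]
    (f g : Causet.Q n → Causet.Q n → ℂ) : ℂ :=
  ∑ x, ∑ y, (starRingEnd ℂ) (f x y) * g x y

/-- The standard basis vector `e_x` (with the convention `e_{ω_0} := 0`). -/
noncomputable def basisO {n : ℕ} : Option (Causet.Q n) → (Causet.Q n → ℂ)
  | some x => fun y => if y = x then 1 else 0
  | none => 0

/-- The tensor product basis vector `e_x ⊗ e_y` (with the convention that any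
factor involving `ω_0` or `ω′_0` is `0`). -/
noncomputable def basisO2 {n : ℕ} (o o' : Option (Causet.Q n)) :
    Causet.Q n → Causet.Q n → ℂ :=
  fun x y => basisO o x * basisO o' y
lemma CausetPath.nth_card {n : ℕ} (ω : CausetPath n) {k : ℕ} {p : Causet.Q n}
    (h : ω.nth k = some p) : p.card = k := by
  unfold CausetPath.nth at h
  split at h
  · rename_i hk
    rw [Option.some_inj] at h
    subst h
    rw [ω.card_eq]
    simp only [Fin.val_mk] at *
    omega
  · exact absurd h (by simp)

lemma evalO2_mul' {n : ℕ} (f g : Causet.Q n → Causet.Q n → ℂ)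
    (o o' : Option (Causet.Q n)) :
    evalO2 (f * g) o o' = evalO2 f o o' * evalO2 g o o' := by
  cases o <;> cases o' <;> simp [evalO2]

/-- a linear operator `T : L_n → L_n` satisfies the Leibniz rule
and vanishes off the pair of paths iff `T = β·△_{ω,ω′}` for some `β ∈ L_n`. -/
theorem bidiffOp_multiple_characterization {n : ℕ} (ω ω' : CausetPath n)
    (T : (Causet.Q n → Causet.Q n → ℂ) →ₗ[ℂ] (Causet.Q n → Causet.Q n → ℂ)) :
    ((∀ (f g : Causet.Q n → Causet.Q n → ℂ) (x y : Causet.Q n),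
        T (f * g) x y =
          f x y * T g x y +
            evalO2 g (ω.nth (x.card - 1)) (ω'.nth (y.card - 1)) * T f x y) ∧
      (∀ (f : Causet.Q n → Causet.Q n → ℂ) (x y : Causet.Q n),
        ω.nth x.card ≠ some x ∨ ω'.nth y.card ≠ some y → T f x y = 0)) ↔
      ∃ β : Causet.Q n → Causet.Q n → ℂ,
        ∀ (f : Causet.Q n → Causet.Q n → ℂ) (x y : Causet.Q n),
          T f x y = β x y * bidiffOp ω ω' f x y := by
  constructor
  · rintro ⟨hL, hV⟩
    refine ⟨fun x y => T (fun u v => if u = x ∧ v = y then 1 else 0) x y,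
      fun f x y => ?_⟩
    by_cases hx : ω.nth x.card = some x
    swap
    · rw [hV f x y (Or.inl hx)]
      simp [bidiffOp, pathDelta, hx]
    by_cases hy : ω'.nth y.card = some y
    swap
    · rw [hV f x y (Or.inr hy)]
      simp [bidiffOp, pathDelta, hy]
    set δ : Causet.Q n → Causet.Q n → ℂ :=
      (fun u v => if u = x ∧ v = y then 1 else 0) with hδ
    have key : ∀ h : Causet.Q n → Causet.Q n → ℂ, h x y = 0 →
        evalO2 h (ω.nth (x.card - 1)) (ω'.nth (y.card - 1)) = 0 →
        T h x y = 0 := by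
      intro h h1 h2
      set g : Causet.Q n → Causet.Q n → ℂ :=
        (fun u v => if h u v = 0 then 0 else 1) with hg
      have hhg : h * g = h := by
        funext u v
        by_cases hz : h u v = 0 <;> simp [hg, hz]
      have hgab : evalO2 g (ω.nth (x.card - 1)) (ω'.nth (y.card - 1)) = 0 := by
        cases ha : ω.nth (x.card - 1) with
        | none => simp [evalO2]
        | some p =>
          cases hb : ω'.nth (y.card - 1) with
          | none => simp [evalO2]
          | some q =>
            rw [ha, hb] at h2
            simp only [evalO2] at h2 ⊢
            simp [hg, h2]
      have hleib := hL h g x y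
      rw [hhg, h1, hgab] at hleib
      simpa using hleib
    have hδab : evalO2 δ (ω.nth (x.card - 1)) (ω'.nth (y.card - 1)) = 0 := by
      cases ha : ω.nth (x.card - 1) with
      | none => simp [evalO2]
      | some p =>
        cases hb : ω'.nth (y.card - 1) with
        | none => simp [evalO2]
        | some q =>
          have hp : p.card = x.card - 1 := ω.nth_card ha
          have hx1 : 1 ≤ x.card := x.2.1
          have hx2 : 1 ≤ x.card - 1 := by
            unfold CausetPath.nth at ha
            split at ha
            · rename_i hk; exact hk.1
            · exact absurd ha (by simp)
          have hpx : p ≠ x := by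
            intro hpx
            rw [hpx] at hp
            omega
          simp [evalO2, hδ, hpx]
    set c := f x y - evalO2 f (ω.nth (x.card - 1)) (ω'.nth (y.card - 1)) with hc
    set d := evalO2 f (ω.nth (x.card - 1)) (ω'.nth (y.card - 1)) with hd
    have hkey : T (f - c • δ - d • (1 : Causet.Q n → Causet.Q n → ℂ)) x y = 0 := by
      apply key
      · simp [hδ, hc]
      · cases ha : ω.nth (x.card - 1) with
        | none => simp [evalO2]
        | some p =>
          cases hb : ω'.nth (y.card - 1) with
          | none => simp [evalO2]
          | some q =>
            rw [ha, hb] at hδab hd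
            simp only [evalO2] at hδab ⊢
            simp [hδab, hd, evalO2]

    have hdecomp : T f x y = c * T δ x y + d * T 1 x y := by
      have := hkey
      rw [map_sub, map_sub, map_smul, map_smul] at this
      simp only [Pi.sub_apply, Pi.smul_apply, smul_eq_mul] at this
      linear_combination this
    have hbid : bidiffOp ω ω' f x y = c := by
      simp [bidiffOp, pathDelta, hx, hy, hc, hd]
    rw [hbid, hdecomp]
    cases ha : ω.nth (x.card - 1) with
    | none =>
      have hd0 : d = 0 := by rw [hd, ha]; simp [evalO2]
      rw [hd0]; ring
    | some p =>
      cases hb : ω'.nth (y.card - 1) with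
      | none =>
        have hd0 : d = 0 := by rw [hd, hb]; cases ω.nth (x.card - 1) <;> simp [evalO2]
        rw [hd0]; ring
      | some q =>
        have hone : T (1 : Causet.Q n → Causet.Q n → ℂ) x y = 0 := by
          have h11 := hL 1 1 x y
          rw [ha, hb, mul_one] at h11
          simp only [Pi.one_apply, evalO2, one_mul] at h11
          linear_combination -h11
        rw [hone]; ring
  · rintro ⟨β, hβ⟩
    constructor
    · intro f g x y
      rw [hβ, hβ, hβ]
      simp only [bidiffOp, evalO2_mul', Pi.mul_apply]
      ring
    · intro f x y h
      rw [hβ]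
      rcases h with h | h <;> simp [bidiffOp, pathDelta, h]
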